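/- arXiv:1906.06785 — 3 statements merged into one kernel-verified Lean document; each statement's English description precedes it below -/
import Mathlib

section
/- Let F be an invertible n×n real matrix, B an m×n real matrix, and suppose S = B F⁻¹ Bᵀ is invertible. With A = fromBlocks F Bᵀ B 0 and P = fromBlocks F Bᵀ 0 (−S), the characteristic polynomial of the preconditioned matrix A · P⁻¹ equals (X − 1)^(n+m); in particular every eigenvalue of A · P⁻¹ equals 1. -/
open Matrix Polynomial

lemma charpoly_one_fin (k : ℕ) :
    (1 : Matrix (Fin k) (Fin k) ℝ).charpoly = (X - C 1) ^ k := by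
  have h : charmatrix (1 : Matrix (Fin k) (Fin k) ℝ) =
      Matrix.diagonal (fun _ => (X - C 1 : Polynomial ℝ)) := by
    ext i j
    by_cases hij : i = j <;>
      simp [charmatrix_apply, Matrix.one_apply, Matrix.diagonal, hij]
  rw [Matrix.charpoly, h, Matrix.det_diagonal]
  simp

/-- With `A = fromBlocks F Bᵀ B 0` and `P = fromBlocks F Bᵀ 0 (-S)` where
`S = B F⁻¹ Bᵀ`, the characteristic polynomial of `A * P⁻¹` is `(X - 1)^(n + m)`;
in particular every eigenvalue of `A * P⁻¹` equals `1`. -/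
theorem charpoly_preconditioned_saddle_point
    {n m : ℕ} (F : Matrix (Fin n) (Fin n) ℝ) (B : Matrix (Fin m) (Fin n) ℝ)
    (hF : IsUnit F) (hS : IsUnit (B * F⁻¹ * Bᵀ)) :
    ((Matrix.fromBlocks F Bᵀ B 0) *
        (Matrix.fromBlocks F Bᵀ 0 (-(B * F⁻¹ * Bᵀ)))⁻¹).charpoly =
      (Polynomial.X - Polynomial.C 1) ^ (n + m) ∧
    ∀ μ : ℝ,
      ((Matrix.fromBlocks F Bᵀ B 0) *
          (Matrix.fromBlocks F Bᵀ 0 (-(B * F⁻¹ * Bᵀ)))⁻¹).charpoly.IsRoot μ → μ = 1 := by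
  set S := B * F⁻¹ * Bᵀ with hSdef
  have hFF : F * F⁻¹ = 1 := Matrix.mul_nonsing_inv F ((Matrix.isUnit_iff_isUnit_det F).mp hF)
  have hSS : S * S⁻¹ = 1 := Matrix.mul_nonsing_inv S ((Matrix.isUnit_iff_isUnit_det S).mp hS)
  have e1 : F * (F⁻¹ * Bᵀ * S⁻¹) = Bᵀ * S⁻¹ := by
    rw [← Matrix.mul_assoc, ← Matrix.mul_assoc, hFF, Matrix.one_mul]
  have e2 : B * (F⁻¹ * Bᵀ * S⁻¹) = 1 := by
    rw [← Matrix.mul_assoc, ← Matrix.mul_assoc, ← hSdef, hSS]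
  set Q : Matrix (Fin n ⊕ Fin m) (Fin n ⊕ Fin m) ℝ :=
    Matrix.fromBlocks F⁻¹ (F⁻¹ * Bᵀ * S⁻¹) 0 (-S⁻¹) with hQ
  have hPQ : (Matrix.fromBlocks F Bᵀ 0 (-S)) * Q = 1 := by
    rw [hQ, Matrix.fromBlocks_multiply]
    simp [e1, hFF, hSS, Matrix.mul_neg, Matrix.neg_mul, Matrix.fromBlocks_one]
  have hPinv : (Matrix.fromBlocks F Bᵀ 0 (-S))⁻¹ = Q := Matrix.inv_eq_right_inv hPQ
  have hAQ : (Matrix.fromBlocks F Bᵀ B 0) * Q =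
      Matrix.fromBlocks 1 0 (B * F⁻¹) 1 := by
    rw [hQ, Matrix.fromBlocks_multiply]
    simp [e1, e2, hFF, Matrix.mul_neg]
  have hcp : ((Matrix.fromBlocks F Bᵀ B 0) *
      (Matrix.fromBlocks F Bᵀ 0 (-S))⁻¹).charpoly = (X - C 1) ^ (n + m) := by
    rw [hPinv, hAQ, Matrix.charpoly_fromBlocks_zero₁₂, charpoly_one_fin, charpoly_one_fin,
      pow_add]
  refine ⟨hcp, fun μ hμ => ?_⟩
  rw [hcp] at hμ
  simp only [IsRoot, eval_pow, eval_sub, eval_X, eval_C] at hμ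
  have := (pow_eq_zero_iff').mp hμ
  linarith [this.1]
end

section
/- Let F be an invertible n×n real matrix, B an m×n real matrix, and suppose S = B F⁻¹ Bᵀ is invertible. With A = fromBlocks F Bᵀ B 0 and P = fromBlocks F Bᵀ 0 (−S), the preconditioned matrix M = A · P⁻¹ satisfies (M − I)² = 0; hence the minimal polynomial of M divides (X − 1)², so all Jordan blocks of M have order at most 2. -/
open Matrix Polynomial

/-- With `A = fromBlocks F Bᵀ B 0` and `P = fromBlocks F Bᵀ 0 (-S)` where
`S = B F⁻¹ Bᵀ`, the preconditioned matrix `M = A * P⁻¹` satisfies `(M - I)² = 0`;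
hence the minimal polynomial of `M` divides `(X - 1)²`. -/
theorem preconditioned_saddle_point_sq_nilpotent
    {n m : ℕ} (F : Matrix (Fin n) (Fin n) ℝ) (B : Matrix (Fin m) (Fin n) ℝ)
    (hF : IsUnit F) (hS : IsUnit (B * F⁻¹ * Bᵀ)) :
    ((Matrix.fromBlocks F Bᵀ B 0) *
        (Matrix.fromBlocks F Bᵀ 0 (-(B * F⁻¹ * Bᵀ)))⁻¹ - 1) ^ 2 = 0 ∧
    minpoly ℝ ((Matrix.fromBlocks F Bᵀ B 0) *
        (Matrix.fromBlocks F Bᵀ 0 (-(B * F⁻¹ * Bᵀ)))⁻¹) ∣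
      (Polynomial.X - Polynomial.C 1) ^ 2 := by
  set S := B * F⁻¹ * Bᵀ with hSdef
  have hF1 : F * F⁻¹ = 1 := Matrix.mul_nonsing_inv F ((Matrix.isUnit_iff_isUnit_det F).mp hF)
  have hS1 : S * S⁻¹ = 1 := Matrix.mul_nonsing_inv S ((Matrix.isUnit_iff_isUnit_det S).mp hS)
  -- explicit inverse of P
  have hPinv : (Matrix.fromBlocks F Bᵀ 0 (-S))⁻¹ =
      Matrix.fromBlocks F⁻¹ (F⁻¹ * Bᵀ * S⁻¹) 0 (-S⁻¹) := by
    apply Matrix.inv_eq_right_inv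
    rw [Matrix.fromBlocks_multiply]
    simp only [Matrix.mul_zero, Matrix.zero_mul, Matrix.neg_mul, Matrix.mul_neg, neg_neg,
      add_zero, zero_add, hS1]
    rw [← Matrix.mul_assoc, ← Matrix.mul_assoc, hF1, Matrix.one_mul, add_neg_cancel,
      ← Matrix.fromBlocks_one]
  have hM : (Matrix.fromBlocks F Bᵀ B 0) *
      (Matrix.fromBlocks F Bᵀ 0 (-(B * F⁻¹ * Bᵀ)))⁻¹ =
      Matrix.fromBlocks 1 0 (B * F⁻¹) 1 := by
    rw [← hSdef, hPinv, Matrix.fromBlocks_multiply]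
    simp only [Matrix.mul_zero, Matrix.zero_mul, Matrix.mul_neg, add_zero, zero_add, hF1]
    have e1 : F * (F⁻¹ * Bᵀ * S⁻¹) + -(Bᵀ * S⁻¹) = 0 := by
      rw [← Matrix.mul_assoc, ← Matrix.mul_assoc, hF1, Matrix.one_mul, add_neg_cancel]
    have e2 : B * (F⁻¹ * Bᵀ * S⁻¹) + -(0 : Matrix (Fin m) (Fin m) ℝ) = 1 := by
      rw [neg_zero, add_zero, ← Matrix.mul_assoc, ← Matrix.mul_assoc, ← hSdef, hS1]
    rw [e1, e2]
  have hsq : ((Matrix.fromBlocks F Bᵀ B 0) *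
      (Matrix.fromBlocks F Bᵀ 0 (-(B * F⁻¹ * Bᵀ)))⁻¹ - 1) ^ 2 = 0 := by
    rw [hM, ← Matrix.fromBlocks_one, pow_two, sub_eq_add_neg, Matrix.fromBlocks_neg,
      Matrix.fromBlocks_add, Matrix.fromBlocks_multiply]
    simp
  refine ⟨hsq, minpoly.dvd ℝ _ ?_⟩
  simp only [map_pow, map_sub, aeval_X, aeval_C]
  simpa using hsq
end

section
/- Let N : ℝ^{n_u} → ℝ^{q×q} be a linear map (assigning to each velocity coefficient vector its discrete convection matrix), let H₁,…,H_{n_ξ} be n_ξ×n_ξ real matrices, and let u be the n_t×n_ξ×n_u tensor given in tensor train format by u(k,l,j) = ∑_{α₁,α₂} u⁽¹⁾(k,α₁)·u⁽²⁾(α₁,l,α₂)·u⁽³⁾(α₂,j). For each k and l let u^k_l ∈ ℝ^{n_u} denote the vector with entries u(k,l,j). Then the block-diagonal matrix whose k-th diagonal block is ∑_{l=1}^{n_ξ} H_l ⊗ N(u^k_l) equals ∑_{α₁,α₂} diag(u⁽¹⁾_{α₁}) ⊗ (∑_{l=1}^{n_ξ} u⁽²⁾(α₁,l,α₂)·H_l)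 ⊗ N(u⁽³⁾_{α₂}), where u⁽¹⁾_{α₁} ∈ ℝ^{n_t} is the α₁-th column of u⁽¹⁾, u⁽³⁾_{α₂} ∈ ℝ^{n_u} is the vector with entries u⁽³⁾(α₂,j), and diag(v) is the diagonal matrix with v on the diagonal. -/
open Matrix Kronecker

/-- Block-diagonal matrix built from a family of square blocks indexed by `Fin nt`,
with block index first (matching the Kronecker-product ordering `I_{n_t} ⊗ ⋯`). -/
def blockDiag {nt : ℕ} {ι : Type*} (A : Fin nt → Matrix ι ι ℝ) :
    Matrix (Fin nt × ι) (Fin nt × ι) ℝ :=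
  Matrix.of fun x y => if x.1 = y.1 then A x.1 x.2 y.2 else 0

/-- For a linear convection-matrix map `N`, stochastic matrices `H_l`, and
a velocity tensor `u` in tensor train format, the block-diagonal all-at-once convection
matrix with `k`-th block `∑_l H_l ⊗ N(u^k_l)` equals the sum of Kronecker products
`∑_{α₁,α₂} diag(u⁽¹⁾_{α₁}) ⊗ (∑_l u⁽²⁾(α₁,l,α₂) H_l) ⊗ N(u⁽³⁾_{α₂})`. -/
theorem convection_matrix_tensor_train
    {nt nξ nu q κ₁ κ₂ : ℕ}
    (N : (Fin nu → ℝ) →ₗ[ℝ] Matrix (Fin q) (Fin q) ℝ)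
    (H : Fin nξ → Matrix (Fin nξ) (Fin nξ) ℝ)
    (u₁ : Fin nt → Fin κ₁ → ℝ) (u₂ : Fin κ₁ → Fin nξ → Fin κ₂ → ℝ)
    (u₃ : Fin κ₂ → Fin nu → ℝ)
    (u : Fin nt → Fin nξ → Fin nu → ℝ)
    (hu : ∀ k l j, u k l j = ∑ α₁ : Fin κ₁, ∑ α₂ : Fin κ₂,
      u₁ k α₁ * u₂ α₁ l α₂ * u₃ α₂ j) :
    blockDiag (fun k => ∑ l : Fin nξ, (H l) ⊗ₖ N (fun j => u k l j)) =
      ∑ α₁ : Fin κ₁, ∑ α₂ : Fin κ₂,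
        (Matrix.diagonal (fun k => u₁ k α₁)) ⊗ₖ
          ((∑ l : Fin nξ, u₂ α₁ l α₂ • H l) ⊗ₖ N (fun j => u₃ α₂ j)) := by

  have hN : ∀ k l, N (fun j => u k l j) =
      ∑ α₁ : Fin κ₁, ∑ α₂ : Fin κ₂,
        (u₁ k α₁ * u₂ α₁ l α₂) • N (fun j => u₃ α₂ j) := by
    intro k l
    have h : (fun j => u k l j) = ∑ α₁ : Fin κ₁, ∑ α₂ : Fin κ₂,
        (u₁ k α₁ * u₂ α₁ l α₂) • (fun j => u₃ α₂ j) := by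
      funext j
      simp [hu, Finset.sum_apply, smul_eq_mul]
    rw [h]
    simp [map_sum, _root_.map_smul]
  ext ⟨k, l₁, j₁⟩ ⟨k', l₂, j₂⟩
  by_cases hk : k = k'
  · subst hk
    simp only [_root_.blockDiag, Matrix.of_apply, if_pos rfl, Matrix.sum_apply,
      Matrix.kroneckerMap_apply, hN, Matrix.smul_apply, smul_eq_mul,
      Matrix.diagonal_apply_eq, Finset.mul_sum, Finset.sum_mul]
    rw [Finset.sum_comm]
    refine Finset.sum_congr rfl fun α₁ _ => ?_
    rw [Finset.sum_comm]
    refine Finset.sum_congr rfl fun α₂ _ => ?_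
    refine Finset.sum_congr rfl fun l _ => ?_
    ring
  · simp [_root_.blockDiag, hk, Matrix.sum_apply, Matrix.kroneckerMap_apply, Matrix.diagonal_apply_ne _ hk]
end
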